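/- Let N ≥ 1. There is a constant C = C(N) > 0 such that for every compactly supported u ∈ H^1(ℝ^N), ‖u‖_{L^2} ≤ C ‖∇u‖_{L^2}^{3/4} ‖|x|^3 u‖_{L^2}^{1/4}. -/

import Mathlib

open MeasureTheory

variable {N : ℕ}



lemma sum_single (x : EuclideanSpace ℝ (Fin N)) :
    ∑ i, x i • EuclideanSpace.single i (1:ℝ) = x := by
  ext j
  rw [WithLp.ofLp_sum, Finset.sum_apply]
  simp [EuclideanSpace.single_apply]

lemma clm_sum (L : EuclideanSpace ℝ (Fin N) →L[ℝ] ℝ) (x : EuclideanSpace ℝ (Fin N)) :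
    L x = ∑ i, x i * L (EuclideanSpace.single i (1:ℝ)) := by
  conv_lhs => rw [← sum_single x]
  rw [map_sum]
  simp [smul_eq_mul]

lemma integrable_aux {u f : EuclideanSpace ℝ (Fin N) → ℝ} (hcs : HasCompactSupport u)
    (hf : Continuous f) (h0 : ∀ x, u x = 0 → f x = 0) : Integrable f := by
  refine hf.integrable_of_hasCompactSupport (hcs.mono fun x hx => ?_)
  simp only [Function.mem_support] at hx ⊢
  exact fun h => hx (h0 x h)

lemma ibp_weight (u : EuclideanSpace ℝ (Fin N) → ℝ) (hu : ContDiff ℝ 1 u)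
    (hcs : HasCompactSupport u) (w : EuclideanSpace ℝ (Fin N) → ℝ)
    (w' : EuclideanSpace ℝ (Fin N) → (EuclideanSpace ℝ (Fin N) →L[ℝ] ℝ))
    (hw : ∀ x, HasFDerivAt w (w' x) x) (hwc : Continuous w) (hw'c : Continuous w') :
    ∫ x, w x * (2 * u x * fderiv ℝ u x x) =
      - ∫ x, ((N:ℝ) * w x + w' x x) * (u x)^2 := by
  have hud : Differentiable ℝ u := hu.differentiable one_ne_zero
  have cu : Continuous u := hu.continuous
  have cDu : Continuous (fderiv ℝ u) := hu.continuous_fderiv one_ne_zero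
  set g : EuclideanSpace ℝ (Fin N) → ℝ := fun x => (u x)^2 with hgdef
  set g' : EuclideanSpace ℝ (Fin N) → (EuclideanSpace ℝ (Fin N) →L[ℝ] ℝ) :=
    fun x => (2 * u x) • fderiv ℝ u x with hg'def
  have hg : ∀ x, HasFDerivAt g (g' x) x := by
    intro x
    have hd := (hud x).hasFDerivAt
    have := hd.mul hd
    have e : g = u * u := by funext y; simp only [hgdef, Pi.mul_apply]; ring
    rw [e]
    refine this.congr_fderiv ?_
    ext v
    simp only [hg'def, ContinuousLinearMap.add_apply, ContinuousLinearMap.smul_apply, smul_eq_mul]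
    ring
  have cg : Continuous g := by continuity
  have cg'v : ∀ v, Continuous (fun x => g' x v) := by
    intro v
    simp only [hg'def, ContinuousLinearMap.coe_smul', Pi.smul_apply, smul_eq_mul]
    exact ((continuous_const.mul cu)).mul (cDu.clm_apply continuous_const)
  have cw'v : ∀ (f : EuclideanSpace ℝ (Fin N) → EuclideanSpace ℝ (Fin N)), Continuous f →
      Continuous (fun x => w' x (f x)) := fun f hf => hw'c.clm_apply hf
  have ci : ∀ i : Fin N, Continuous (fun x : EuclideanSpace ℝ (Fin N) => x i) :=
    fun i => (EuclideanSpace.proj (𝕜 := ℝ) i).continuous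
  have h1 : ∀ i : Fin N, Integrable (fun x => w x * g x +
      x i * w' x (EuclideanSpace.single i (1:ℝ)) * g x) := by
    intro i
    refine integrable_aux hcs ?_ (fun x hx => by simp [hgdef, hx])
    exact (hwc.mul cg).add (((ci i).mul (cw'v _ continuous_const)).mul cg)
  have h2 : ∀ i : Fin N, Integrable (fun x =>
      (w x * x i) * (g' x (EuclideanSpace.single i (1:ℝ)))) := by
    intro i
    refine integrable_aux hcs ?_ (fun x hx => by simp [hg'def, hx])
    exact (hwc.mul (ci i)).mul (cg'v _)
  -- per-coordinate integration by parts
  have key : ∀ i : Fin N,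
      ∫ x, (w x * x i) * (g' x (EuclideanSpace.single i (1:ℝ))) =
        - ∫ x, (w x * g x + x i * w' x (EuclideanSpace.single i (1:ℝ)) * g x) := by
    intro i
    have hproj : ∀ x : EuclideanSpace ℝ (Fin N),
        HasFDerivAt (fun y : EuclideanSpace ℝ (Fin N) => y i)
          (EuclideanSpace.proj i : EuclideanSpace ℝ (Fin N) →L[ℝ] ℝ) x := by
      intro x
      exact (EuclideanSpace.proj (𝕜 := ℝ) i).hasFDerivAt
    have hf : ∀ x, HasFDerivAt (fun y : EuclideanSpace ℝ (Fin N) => w y * y i)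
        (w x • EuclideanSpace.proj i + x i • w' x) x := fun x => (hw x).mul (hproj x)
    have h3 : Integrable (fun x => (w x * x i) * g x) :=
      integrable_aux hcs ((hwc.mul (ci i)).mul cg) (fun x hx => by simp [hgdef, hx])
    have := integral_bilinear_hasFDerivAt_right_eq_neg_left_of_integrable
      (μ := volume) (B := ContinuousLinearMap.mul ℝ ℝ) (v := EuclideanSpace.single i (1:ℝ))
      (f := fun x => w x * x i) (g := g) (f' := fun x => w x • EuclideanSpace.proj i + x i • w' x)
      (g' := g') ?_ ?_ ?_ (fun x _ => hf x) (fun x _ => hg x)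
    · simpa using this
    · simpa [add_mul, mul_assoc] using h1 i
    · simpa using h2 i
    · simpa using h3
  have LHS : ∑ i, ∫ x, (w x * x i) * (g' x (EuclideanSpace.single i (1:ℝ)))
      = ∫ x, w x * (2 * u x * fderiv ℝ u x x) := by
    rw [← integral_finset_sum _ (fun i _ => h2 i)]
    refine integral_congr_ae (Filter.Eventually.of_forall fun x => ?_)
    have : (2 * u x * fderiv ℝ u x x) = g' x x := by simp [hg'def]
    dsimp only
    rw [this, clm_sum (g' x) x, Finset.mul_sum]
    exact Finset.sum_congr rfl fun i _ => by ring
  have RHS : ∑ i, (- ∫ x, (w x * g x + x i * w' x (EuclideanSpace.single i (1:ℝ)) * g x))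
      = - ∫ x, ((N:ℝ) * w x + w' x x) * g x := by
    rw [Finset.sum_neg_distrib, ← integral_finset_sum _ (fun i _ => h1 i)]
    congr 1
    refine integral_congr_ae (Filter.Eventually.of_forall fun x => ?_)
    dsimp only
    rw [Finset.sum_add_distrib, Finset.sum_const, Finset.card_univ, Fintype.card_fin,
      clm_sum (w' x) x, add_mul, Finset.sum_mul, nsmul_eq_mul, ← mul_assoc]
  calc ∫ x, w x * (2 * u x * fderiv ℝ u x x)
      = ∑ i, ∫ x, (w x * x i) * (g' x (EuclideanSpace.single i (1:ℝ))) := LHS.symm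
    _ = ∑ i, (- ∫ x, (w x * g x + x i * w' x (EuclideanSpace.single i (1:ℝ)) * g x)) :=
        Finset.sum_congr rfl fun i _ => key i
    _ = - ∫ x, ((N:ℝ) * w x + w' x x) * (u x)^2 := RHS


lemma support_aux {u f : EuclideanSpace ℝ (Fin N) → ℝ} (hcs : HasCompactSupport u)
    (h0 : ∀ x, u x = 0 → f x = 0) : HasCompactSupport f := by
  refine hcs.mono fun x hx => ?_
  simp only [Function.mem_support] at hx ⊢
  exact fun h => hx (h0 x h)

lemma holder2 {f g : EuclideanSpace ℝ (Fin N) → ℝ} (hf : Continuous f) (hg : Continuous g)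
    (hcf : HasCompactSupport f) (hcg : HasCompactSupport g)
    (hf0 : ∀ x, 0 ≤ f x) (hg0 : ∀ x, 0 ≤ g x) :
    ∫ x, f x * g x ≤ (∫ x, (f x)^2) ^ ((1:ℝ)/2) * (∫ x, (g x)^2) ^ ((1:ℝ)/2) := by
  have hpq : Real.HolderConjugate 2 2 := Real.HolderConjugate.two_two
  have := integral_mul_le_Lp_mul_Lq_of_nonneg (μ := volume) hpq
    (Filter.Eventually.of_forall hf0) (Filter.Eventually.of_forall hg0)
    (hf.memLp_of_hasCompactSupport hcf) (hg.memLp_of_hasCompactSupport hcg)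
  simpa [Real.rpow_two] using this

lemma final_arith {d m : ℝ} (hd : 0 ≤ d) (hm : 0 ≤ m) :
    (2*((2*(m*d))^((1:ℝ)/2) * d))^((1:ℝ)/2) ≤ 2 * d^((3:ℝ)/4) * m^((1:ℝ)/4) := by
  have hd2 : (0:ℝ) ≤ 2 := by norm_num
  have e_d : d ^ ((1:ℝ)/2) * d = d ^ ((3:ℝ)/2) := by
    nth_rewrite 2 [← Real.rpow_one d]
    rw [← Real.rpow_add' hd (by norm_num)]
    norm_num
  have e_two : (2:ℝ) * 2 ^ ((1:ℝ)/2) = 2 ^ ((3:ℝ)/2) := by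
    nth_rewrite 1 [← Real.rpow_one 2]
    rw [← Real.rpow_add (by norm_num : (0:ℝ) < 2)]
    norm_num
  have h1 : 2*((2*(m*d))^((1:ℝ)/2) * d) = 2^((3:ℝ)/2) * (m^((1:ℝ)/2) * d^((3:ℝ)/2)) := by
    rw [Real.mul_rpow hd2 (mul_nonneg hm hd), Real.mul_rpow hm hd]
    rw [← e_d, ← e_two]
    ring
  rw [h1]
  have h2 : (2^((3:ℝ)/2) * (m^((1:ℝ)/2) * d^((3:ℝ)/2)))^((1:ℝ)/2)
      = 2^((3:ℝ)/4) * (m^((1:ℝ)/4) * d^((3:ℝ)/4)) := by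
    rw [Real.mul_rpow (Real.rpow_nonneg hd2 _)
      (mul_nonneg (Real.rpow_nonneg hm _) (Real.rpow_nonneg hd _)),
      Real.mul_rpow (Real.rpow_nonneg hm _) (Real.rpow_nonneg hd _)]
    rw [← Real.rpow_mul hd2, ← Real.rpow_mul hm, ← Real.rpow_mul hd]
    norm_num
  rw [h2]
  have h3 : (2:ℝ)^((3:ℝ)/4) ≤ 2 := by
    calc (2:ℝ)^((3:ℝ)/4) ≤ 2^((1:ℝ)) :=
          Real.rpow_le_rpow_of_exponent_le one_le_two (by norm_num)
      _ = 2 := Real.rpow_one 2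
  calc 2^((3:ℝ)/4) * (m^((1:ℝ)/4) * d^((3:ℝ)/4))
      ≤ 2 * (m^((1:ℝ)/4) * d^((3:ℝ)/4)) :=
        mul_le_mul_of_nonneg_right h3
          (mul_nonneg (Real.rpow_nonneg hm _) (Real.rpow_nonneg hd _))
    _ = 2 * d^((3:ℝ)/4) * m^((1:ℝ)/4) := by ring


theorem ckn_k2 (N : ℕ) (hN : 1 ≤ N) :
    ∃ C > 0, ∀ u : EuclideanSpace ℝ (Fin N) → ℝ,
      ContDiff ℝ 1 u → HasCompactSupport u →
      (∫ x, (u x)^2) ^ ((1:ℝ)/2) ≤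
        C * ((∫ x, ‖fderiv ℝ u x‖^2) ^ ((1:ℝ)/2)) ^ ((3:ℝ)/4) *
          ((∫ x, ‖x‖^6 * (u x)^2) ^ ((1:ℝ)/2)) ^ ((1:ℝ)/4) := by
  refine ⟨2, by norm_num, fun u hu hcs => ?_⟩
  have hud : Differentiable ℝ u := hu.differentiable one_ne_zero
  have cu : Continuous u := hu.continuous
  have cDu : Continuous (fderiv ℝ u) := hu.continuous_fderiv one_ne_zero
  set A := ∫ x, (u x)^2 with hA
  set D := ∫ x : EuclideanSpace ℝ (Fin N), ‖fderiv ℝ u x‖^2 with hD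
  set B := ∫ x : EuclideanSpace ℝ (Fin N), ‖x‖^2 * (u x)^2 with hB
  set M := ∫ x : EuclideanSpace ℝ (Fin N), ‖x‖^6 * (u x)^2 with hM
  have hA0 : 0 ≤ A := integral_nonneg fun x => sq_nonneg _
  have hD0 : 0 ≤ D := integral_nonneg fun x => by positivity
  have hB0 : 0 ≤ B := integral_nonneg fun x => by positivity
  have hM0 : 0 ≤ M := integral_nonneg fun x => by positivity
  -- first integration by parts : ∫ 2 u Du·x = -(N A)
  have e1 := ibp_weight u hu hcs (fun _ => (1:ℝ)) (fun _ => 0)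
    (fun x => hasFDerivAt_const 1 x) continuous_const continuous_const
  simp only [one_mul, mul_one, ContinuousLinearMap.zero_apply, add_zero] at e1
  rw [integral_const_mul] at e1
  -- second integration by parts
  have e2 := ibp_weight u hu hcs (fun y => ‖y‖^2) (fun x => 2 • (innerSL ℝ x))
    (fun x => (hasStrictFDerivAt_norm_sq x).hasFDerivAt)
    (continuous_norm.pow 2) ((innerSL ℝ).continuous.const_smul 2)
  simp only [ContinuousLinearMap.smul_apply, innerSL_apply_apply, real_inner_self_eq_norm_sq,
    nsmul_eq_mul, Nat.cast_ofNat] at e2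
  have e2' : ∫ x : EuclideanSpace ℝ (Fin N), ‖x‖^2 * (2*u x*fderiv ℝ u x x)
      = -(((N:ℝ)+2) * B) := by
    rw [e2]
    congr 1
    rw [hB, ← integral_const_mul]
    exact integral_congr_ae (Filter.Eventually.of_forall fun x => by ring)
  -- pointwise and integral bounds, case 1
  have intf1 : Integrable (fun x : EuclideanSpace ℝ (Fin N) => 2*u x*fderiv ℝ u x x) :=
    integrable_aux hcs ((continuous_const.mul cu).mul (cDu.clm_apply continuous_id))
      (fun x hx => by simp [hx])
  have intb1 : Integrable (fun x : EuclideanSpace ℝ (Fin N) =>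
      2*((‖x‖*|u x|) * ‖fderiv ℝ u x‖)) :=
    integrable_aux hcs
      (continuous_const.mul ((continuous_norm.mul cu.abs).mul cDu.norm))
      (fun x hx => by simp [hx])
  have hcf1 : HasCompactSupport (fun x : EuclideanSpace ℝ (Fin N) => ‖x‖*|u x|) :=
    support_aux hcs (fun x hx => by simp [hx])
  have hcg1 : HasCompactSupport (fun x : EuclideanSpace ℝ (Fin N) => ‖fderiv ℝ u x‖) :=
    (HasCompactSupport.fderiv (𝕜 := ℝ) hcs).norm
  have hq1 : (N:ℝ) * A ≤ 2 * (B^((1:ℝ)/2) * D^((1:ℝ)/2)) := by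
    have step1 : (N:ℝ)*A ≤ ∫ x : EuclideanSpace ℝ (Fin N),
        2*((‖x‖*|u x|) * ‖fderiv ℝ u x‖) := by
      have hNA : (N:ℝ)*A = -∫ x, 2*u x*fderiv ℝ u x x := by rw [e1, hA]; ring
      rw [hNA]
      calc -∫ x, 2*u x*fderiv ℝ u x x ≤ |∫ x, 2*u x*fderiv ℝ u x x| := neg_le_abs _
        _ ≤ ∫ x, |2*u x*fderiv ℝ u x x| := by
            simpa only [Real.norm_eq_abs] using
              norm_integral_le_integral_norm (μ := volume)
                (fun x : EuclideanSpace ℝ (Fin N) => 2*u x*fderiv ℝ u x x)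
        _ ≤ _ := by
            refine integral_mono intf1.abs intb1 fun x => ?_
            have hb : |fderiv ℝ u x x| ≤ ‖fderiv ℝ u x‖ * ‖x‖ := by
              simpa [Real.norm_eq_abs] using (fderiv ℝ u x).le_opNorm x
            have h0 : |2*u x*fderiv ℝ u x x| = 2*(|u x| * |fderiv ℝ u x x|) := by
              rw [abs_mul, abs_mul, abs_two]; ring
            rw [h0]
            nlinarith [abs_nonneg (u x), abs_nonneg (fderiv ℝ u x x),
              mul_le_mul_of_nonneg_left hb (abs_nonneg (u x))]
    refine step1.trans ?_
    rw [integral_const_mul]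
    have hh := holder2 (f := fun x : EuclideanSpace ℝ (Fin N) => ‖x‖*|u x|)
      (g := fun x => ‖fderiv ℝ u x‖) (continuous_norm.mul cu.abs) cDu.norm hcf1 hcg1
      (fun x => by positivity) (fun x => norm_nonneg _)
    have hfB : ∫ x : EuclideanSpace ℝ (Fin N), (‖x‖*|u x|)^2 = B := by
      rw [hB]
      exact integral_congr_ae (Filter.Eventually.of_forall fun x => by
        dsimp only; rw [mul_pow, sq_abs])
    beta_reduce at hh
    rw [hfB] at hh
    exact mul_le_mul_of_nonneg_left hh (by norm_num)
  -- pointwise and integral bounds, case 2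
  have intf2 : Integrable (fun x : EuclideanSpace ℝ (Fin N) =>
      ‖x‖^2 * (2*u x*fderiv ℝ u x x)) :=
    integrable_aux hcs ((continuous_norm.pow 2).mul
      ((continuous_const.mul cu).mul (cDu.clm_apply continuous_id)))
      (fun x hx => by simp [hx])
  have intb2 : Integrable (fun x : EuclideanSpace ℝ (Fin N) =>
      2*((‖x‖^3*|u x|) * ‖fderiv ℝ u x‖)) :=
    integrable_aux hcs
      (continuous_const.mul (((continuous_norm.pow 3).mul cu.abs).mul cDu.norm))
      (fun x hx => by simp [hx])
  have hcf2 : HasCompactSupport (fun x : EuclideanSpace ℝ (Fin N) => ‖x‖^3*|u x|) :=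
    support_aux hcs (fun x hx => by simp [hx])
  have hq2 : ((N:ℝ)+2) * B ≤ 2 * (M^((1:ℝ)/2) * D^((1:ℝ)/2)) := by
    have step1 : ((N:ℝ)+2)*B ≤ ∫ x : EuclideanSpace ℝ (Fin N),
        2*((‖x‖^3*|u x|) * ‖fderiv ℝ u x‖) := by
      have hNB : ((N:ℝ)+2)*B = -∫ x : EuclideanSpace ℝ (Fin N),
          ‖x‖^2 * (2*u x*fderiv ℝ u x x) := by rw [e2']; ring
      rw [hNB]
      calc -∫ x : EuclideanSpace ℝ (Fin N), ‖x‖^2 * (2*u x*fderiv ℝ u x x)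
          ≤ |∫ x : EuclideanSpace ℝ (Fin N), ‖x‖^2 * (2*u x*fderiv ℝ u x x)| := neg_le_abs _
        _ ≤ ∫ x : EuclideanSpace ℝ (Fin N), |‖x‖^2 * (2*u x*fderiv ℝ u x x)| := by
            exact abs_integral_le_integral_abs
        _ ≤ _ := by
            refine integral_mono intf2.abs intb2 fun x => ?_
            have hb : |fderiv ℝ u x x| ≤ ‖fderiv ℝ u x‖ * ‖x‖ := by
              simpa [Real.norm_eq_abs] using (fderiv ℝ u x).le_opNorm x
            have h0 : |‖x‖^2 * (2*u x*fderiv ℝ u x x)|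
                = ‖x‖^2 * (2*(|u x| * |fderiv ℝ u x x|)) := by
              rw [abs_mul, abs_of_nonneg (by positivity : (0:ℝ) ≤ ‖x‖^2), abs_mul, abs_mul,
                abs_two]
              ring
            rw [h0]
            have h1 : |u x| * |fderiv ℝ u x x| ≤ |u x| * (‖fderiv ℝ u x‖ * ‖x‖) :=
              mul_le_mul_of_nonneg_left hb (abs_nonneg (u x))
            nlinarith [norm_nonneg x, abs_nonneg (u x), norm_nonneg (fderiv ℝ u x),
              mul_le_mul_of_nonneg_left h1 (by positivity : (0:ℝ) ≤ ‖x‖^2), pow_nonneg (norm_nonneg x) 2]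
    refine step1.trans ?_
    rw [integral_const_mul]
    have hh := holder2 (f := fun x : EuclideanSpace ℝ (Fin N) => ‖x‖^3*|u x|)
      (g := fun x => ‖fderiv ℝ u x‖) ((continuous_norm.pow 3).mul cu.abs) cDu.norm hcf2 hcg1
      (fun x => by positivity) (fun x => norm_nonneg _)
    have hfM : ∫ x : EuclideanSpace ℝ (Fin N), (‖x‖^3*|u x|)^2 = M := by
      rw [hM]
      exact integral_congr_ae (Filter.Eventually.of_forall fun x => by
        dsimp only; rw [mul_pow, sq_abs, ← pow_mul])
    beta_reduce at hh
    rw [hfM] at hh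
    exact mul_le_mul_of_nonneg_left hh (by norm_num)
  -- combine
  have hA1 : A ≤ 2*(B^((1:ℝ)/2)*D^((1:ℝ)/2)) :=
    le_trans (le_mul_of_one_le_left hA0 (by exact_mod_cast hN)) hq1
  have hB1 : B ≤ 2*(M^((1:ℝ)/2)*D^((1:ℝ)/2)) := by
    refine le_trans (le_mul_of_one_le_left hB0 ?_) hq2
    have : (0:ℝ) ≤ (N:ℝ) := Nat.cast_nonneg N
    linarith
  have hBr : B^((1:ℝ)/2) ≤ (2*(M^((1:ℝ)/2)*D^((1:ℝ)/2)))^((1:ℝ)/2) :=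
    Real.rpow_le_rpow hB0 hB1 (by norm_num)
  have hA2 : A ≤ 2*((2*(M^((1:ℝ)/2)*D^((1:ℝ)/2)))^((1:ℝ)/2) * D^((1:ℝ)/2)) := by
    refine hA1.trans ?_
    have := mul_le_mul_of_nonneg_right hBr (Real.rpow_nonneg hD0 ((1:ℝ)/2))
    linarith
  have hA3 : A^((1:ℝ)/2) ≤
      (2*((2*(M^((1:ℝ)/2)*D^((1:ℝ)/2)))^((1:ℝ)/2) * D^((1:ℝ)/2)))^((1:ℝ)/2) :=
    Real.rpow_le_rpow hA0 hA2 (by norm_num)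
  exact hA3.trans (final_arith (Real.rpow_nonneg hD0 _) (Real.rpow_nonneg hM0 _))
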